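/- arXiv:1911.10409 — 2 statements merged into one kernel-verified Lean document; each statement's English description precedes it below -/
import Mathlib

section
/- Every complex solution of the equation tan(z) = z is real, i.e. if z ∈ ℂ, cos(z) ≠ 0, and sin(z) = z·cos(z), then the imaginary part of z is zero. -/
lemma key_sinh (t : ℝ) (ht : 0 < t) : Real.sinh t < t * Real.cosh t := by
  have h0 : StrictMonoOn (fun u => u * Real.cosh u - Real.sinh u) (Set.Ici 0) := by
    apply strictMonoOn_of_deriv_pos (convex_Ici 0)
    · exact ((continuous_id.mul Real.continuous_cosh).sub Real.continuous_sinh).continuousOn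
    · intro u hu
      rw [interior_Ici, Set.mem_Ioi] at hu
      have hd : HasDerivAt (fun u => u * Real.cosh u - Real.sinh u)
          (1 * Real.cosh u + u * Real.sinh u - Real.cosh u) u :=
        ((hasDerivAt_id u).mul (Real.hasDerivAt_cosh u)).sub (Real.hasDerivAt_sinh u)
      rw [hd.deriv]
      have := Real.sinh_pos_iff.2 hu
      nlinarith
  have := h0 (Set.mem_Ici.2 le_rfl) (Set.mem_Ici.2 ht.le) ht
  simp only [Real.sinh_zero, Real.cosh_zero, mul_one, zero_mul, sub_zero, zero_sub] at this
  linarith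

theorem stmt9 (z : ℂ) (hz : Complex.cos z ≠ 0)
    (h : Complex.sin z = z * Complex.cos z) : z.im = 0 := by
  by_contra hy
  set x := z.re with hxdef
  set y := z.im with hydef
  have e1 : (Complex.sin z).re = Real.sin x * Real.cosh y := by
    rw [Complex.sin_eq]
    simp [← Complex.ofReal_sin, ← Complex.ofReal_cos, ← Complex.ofReal_sinh,
      ← Complex.ofReal_cosh]
    rfl
  have e2 : (Complex.sin z).im = Real.cos x * Real.sinh y := by
    rw [Complex.sin_eq]
    simp [← Complex.ofReal_sin, ← Complex.ofReal_cos, ← Complex.ofReal_sinh,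
      ← Complex.ofReal_cosh]
    rfl
  have e3 : (Complex.cos z).re = Real.cos x * Real.cosh y := by
    rw [Complex.cos_eq]
    simp [← Complex.ofReal_sin, ← Complex.ofReal_cos, ← Complex.ofReal_sinh,
      ← Complex.ofReal_cosh]
    rfl
  have e4 : (Complex.cos z).im = -(Real.sin x * Real.sinh y) := by
    rw [Complex.cos_eq]
    simp [← Complex.ofReal_sin, ← Complex.ofReal_cos, ← Complex.ofReal_sinh,
      ← Complex.ofReal_cosh]
    rfl
  have h1 := congrArg Complex.re h
  have h2 := congrArg Complex.im h
  rw [Complex.mul_re, e1, e3, e4, ← hxdef, ← hydef] at h1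
  rw [Complex.mul_im, e2, e3, e4, ← hxdef, ← hydef] at h2
  have pyth : Real.sin x ^ 2 + Real.cos x ^ 2 = 1 := Real.sin_sq_add_cos_sq x
  have hch : Real.cosh y ^ 2 = 1 + Real.sinh y ^ 2 := by
    have := Real.cosh_sq_sub_sinh_sq y; nlinarith
  have hI : Real.sinh y * Real.cosh y = y * (Real.cos x ^ 2 + Real.sinh y ^ 2) := by
    linear_combination (Real.cos x * Real.cosh y) * h2 + (Real.sin x * Real.sinh y) * h1
      - (Real.sinh y * Real.cosh y) * pyth + (y * Real.cos x ^ 2) * hch + (y * Real.sinh y ^ 2) * pyth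
  have hR : Real.sin x * Real.cos x = x * (Real.cos x ^ 2 + Real.sinh y ^ 2) := by
    linear_combination (Real.cos x * Real.cosh y) * h1 - (Real.sin x * Real.sinh y) * h2
      + (x * Real.cos x ^ 2 - Real.sin x * Real.cos x) * hch + (x * Real.sinh y ^ 2) * pyth
  have hS : 1 < Real.cos x ^ 2 + Real.sinh y ^ 2 := by
    rcases lt_or_gt_of_ne hy with hneg | hpos
    · have h1' : Real.sinh y < y := Real.sinh_lt_self_iff.2 hneg
      have h2' : 1 ≤ Real.cosh y := Real.one_le_cosh y
      have h3' : Real.sinh y < 0 := Real.sinh_neg_iff.2 hneg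
      have hlt : Real.sinh y * Real.cosh y < y := by nlinarith
      rw [hI] at hlt
      nlinarith
    · have h1' : y < Real.sinh y := Real.self_lt_sinh_iff.2 hpos
      have h2' : 1 ≤ Real.cosh y := Real.one_le_cosh y
      have h3' : 0 < Real.sinh y := Real.sinh_pos_iff.2 hpos
      have hlt : y < Real.sinh y * Real.cosh y := by nlinarith
      rw [hI] at hlt
      nlinarith
  have hx0 : x = 0 := by
    rcases lt_trichotomy x 0 with hneg | h0 | hpos
    · have hs : Real.sin (2 * (-x)) < 2 * (-x) := Real.sin_lt (by linarith)
      rw [Real.sin_two_mul, Real.sin_neg, Real.cos_neg] at hs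
      nlinarith [mul_pos (neg_pos.2 hneg) (sub_pos.2 hS)]
    · exact h0
    · have hs : Real.sin (2 * x) < 2 * x := Real.sin_lt (by linarith)
      rw [Real.sin_two_mul] at hs
      nlinarith [mul_pos hpos (sub_pos.2 hS)]
  rw [hx0] at hI
  simp only [Real.cos_zero, one_pow] at hI
  have hkey : y * Real.cosh y * Real.cosh y = Real.sinh y * Real.cosh y := by
    rw [hI]; linear_combination y * hch
  rcases lt_or_gt_of_ne hy with hneg | hpos
  · have hk := key_sinh (-y) (by linarith)
    rw [Real.sinh_neg, Real.cosh_neg] at hk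
    have hk2 : y * Real.cosh y < Real.sinh y := by linarith
    have hmul := mul_lt_mul_of_pos_right hk2 (Real.cosh_pos y)
    linarith
  · have hk := key_sinh y hpos
    have hmul := mul_lt_mul_of_pos_right hk (Real.cosh_pos y)
    linarith
end

section
/- Every complex zero of the entire function g(z) = sin(z) - z·cos(z) is real. -/
lemma aux_sinh_lt_mul_cosh {t : ℝ} (ht : 0 < t) : Real.sinh t < t * Real.cosh t := by
  have hmono : StrictMonoOn (fun s : ℝ => s * Real.cosh s - Real.sinh s) (Set.Ici 0) := by
    apply strictMonoOn_of_deriv_pos (convex_Ici 0)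
    · exact ((continuous_id.mul Real.continuous_cosh).sub Real.continuous_sinh).continuousOn
    · intro s hs
      rw [interior_Ici, Set.mem_Ioi] at hs
      have hd : HasDerivAt (fun s : ℝ => s * Real.cosh s - Real.sinh s) (s * Real.sinh s) s := by
        have h1 := (hasDerivAt_id s).mul (Real.hasDerivAt_cosh s)
        have h2 := Real.hasDerivAt_sinh s
        refine (h1.sub h2).congr_deriv ?_
        simp only [id_eq]
        ring
      rw [hd.deriv]
      exact mul_pos hs (Real.sinh_pos_iff.2 hs)
  have h0 : (0 : ℝ) * Real.cosh 0 - Real.sinh 0 < t * Real.cosh t - Real.sinh t :=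
    hmono (Set.self_mem_Ici) (le_of_lt ht) ht
  simp only [Real.cosh_zero, Real.sinh_zero, zero_mul, sub_zero] at h0
  linarith

lemma aux_lt_sinh_mul_cosh {t : ℝ} (ht : 0 < t) : t < Real.sinh t * Real.cosh t := by
  have h := Real.self_lt_sinh_iff.2 (by linarith : 0 < 2 * t)
  rw [Real.sinh_two_mul] at h
  linarith

theorem stmt10 (z : ℂ) (h : Complex.sin z - z * Complex.cos z = 0) : z.im = 0 := by
  by_contra hy
  rw [sub_eq_zero, Complex.cos_eq, Complex.sin_eq] at h
  have e1 := congrArg Complex.re h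
  have e2 := congrArg Complex.im h
  simp only [Complex.add_re, Complex.sub_re, Complex.mul_re, Complex.mul_im,
    Complex.add_im, Complex.sub_im, Complex.I_re, Complex.I_im,
    Complex.sin_ofReal_re, Complex.sin_ofReal_im, Complex.cos_ofReal_re, Complex.cos_ofReal_im,
    Complex.sinh_ofReal_re, Complex.sinh_ofReal_im, Complex.cosh_ofReal_re,
    Complex.cosh_ofReal_im, mul_zero, zero_mul, mul_one, sub_zero, zero_sub, add_zero,
    zero_add, neg_zero, mul_neg, neg_neg, neg_mul] at e1 e2
  set x := z.re with hxdef
  set y := z.im with hydef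
  have hc : Real.sin x ^ 2 + Real.cos x ^ 2 = 1 := Real.sin_sq_add_cos_sq x
  have hC : Real.cosh y ^ 2 = Real.sinh y ^ 2 + 1 := Real.cosh_sq y
  have hA : Real.sin x * Real.cos x = x * (Real.cos x ^ 2 + Real.sinh y ^ 2) := by
    linear_combination (Real.cos x * Real.cosh y) * e1 - (Real.sin x * Real.sinh y) * e2 +
      (x * Real.cos x ^ 2 - Real.sin x * Real.cos x) * hC + (x * Real.sinh y ^ 2) * hc
  have hB : Real.sinh y * Real.cosh y = y * (Real.cos x ^ 2 + Real.sinh y ^ 2) := by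
    linear_combination (Real.sin x * Real.sinh y) * e1 + (Real.cos x * Real.cosh y) * e2 +
      (y * Real.cos x ^ 2) * hC + (y * Real.sinh y ^ 2 - Real.sinh y * Real.cosh y) * hc
  -- D > 1
  have hD : 1 < Real.cos x ^ 2 + Real.sinh y ^ 2 := by
    rcases lt_or_gt_of_ne hy with h1 | h1
    · have := aux_lt_sinh_mul_cosh (t := -y) (by linarith)
      rw [Real.sinh_neg, Real.cosh_neg] at this
      nlinarith [hB]
    · have := aux_lt_sinh_mul_cosh h1
      nlinarith [hB]
  have hx0 : x = 0 := by
    by_contra hx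
    have h1 : |Real.sin x| ≤ |x| := Real.abs_sin_le_abs
    have h2 : |Real.cos x| ≤ 1 := Real.abs_cos_le_one x
    have h3 : |x| * (Real.cos x ^ 2 + Real.sinh y ^ 2) = |Real.sin x| * |Real.cos x| := by
      rw [← abs_mul, hA, abs_mul, abs_of_pos (by linarith : (0:ℝ) < Real.cos x ^ 2 + Real.sinh y ^ 2)]
    nlinarith [abs_pos.2 hx, abs_nonneg (Real.sin x), abs_nonneg (Real.cos x)]
  rw [hx0] at hB
  simp only [Real.cos_zero, one_pow] at hB
  -- hB : sinh y * cosh y = y * (1 + sinh y ^ 2) = y * cosh y ^2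
  have hcoshpos : 0 < Real.cosh y := Real.cosh_pos y
  rcases lt_or_gt_of_ne hy with h1 | h1
  · have := aux_sinh_lt_mul_cosh (t := -y) (by linarith)
    rw [Real.sinh_neg, Real.cosh_neg] at this
    nlinarith [hB, hC]
  · have := aux_sinh_lt_mul_cosh h1
    nlinarith [hB, hC]
end
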